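/- arXiv:2411.16396 — 2 statements merged into one kernel-verified Lean document; each statement's English description precedes it below -/
import Mathlib

section
/- For positive definite Hermitian matrices P and Q, the difference of matrix logarithms admits the integral representation log P - log Q = ∫₀^∞ (sI+P)^{-1}(P-Q)(sI+Q)^{-1} ds. -/
open ComplexOrder MeasureTheory

section ScalarLemmas

open Set Filter Topology

private lemma base_int_aux (a b : ℝ) (ha : 0 < a) (hb : 0 < b) (hab : a ≤ b) :
    IntegrableOn (fun s : ℝ => (s + a)⁻¹ - (s + b)⁻¹) (Set.Ioi 0) ∧
      ∫ s in Set.Ioi (0:ℝ), ((s + a)⁻¹ - (s + b)⁻¹) = Real.log b - Real.log a := by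
  have hderiv : ∀ x ∈ Ici (0:ℝ), HasDerivAt (fun s => Real.log (s + a) - Real.log (s + b))
      ((x + a)⁻¹ - (x + b)⁻¹) x := by
    intro x hx
    have hx0 : (0:ℝ) ≤ x := hx
    have h1 : HasDerivAt (fun s : ℝ => s + a) 1 x := (hasDerivAt_id x).add_const a
    have h2 : HasDerivAt (fun s : ℝ => s + b) 1 x := (hasDerivAt_id x).add_const b
    have l1 := (Real.hasDerivAt_log (by positivity : x + a ≠ 0)).comp x h1
    have l2 := (Real.hasDerivAt_log (by positivity : x + b ≠ 0)).comp x h2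
    have := l1.sub l2; simp only [mul_one] at this; exact this
  have hpos : ∀ x ∈ Ioi (0:ℝ), 0 ≤ (x + a)⁻¹ - (x + b)⁻¹ := by
    intro x hx
    have hx0 : (0:ℝ) < x := hx
    have : (x + b)⁻¹ ≤ (x + a)⁻¹ := by
      apply inv_anti₀ (by positivity) (by linarith)
    linarith
  have htend : Tendsto (fun s => Real.log (s + a) - Real.log (s + b)) atTop (𝓝 0) := by
    have h1 : Tendsto (fun s : ℝ => (s + a) / (s + b)) atTop (𝓝 1) := by
      have : (fun s : ℝ => (s + a) / (s + b)) =ᶠ[atTop] fun s => (1 + a * s⁻¹) / (1 + b * s⁻¹) := by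
        filter_upwards [eventually_gt_atTop 0] with s hs
        field_simp
      rw [tendsto_congr' this]
      have := ((tendsto_const_nhds (x := (1:ℝ))).add
        ((tendsto_const_nhds (x := a)).mul tendsto_inv_atTop_zero)).div
        ((tendsto_const_nhds (x := (1:ℝ))).add
        ((tendsto_const_nhds (x := b)).mul tendsto_inv_atTop_zero)) (by norm_num)
      exact (by simpa using this : Tendsto ((fun x : ℝ => 1 + a * x⁻¹) / fun x => 1 + b * x⁻¹) atTop (𝓝 1))
    have h2 : Tendsto (fun s : ℝ => Real.log ((s + a) / (s + b))) atTop (𝓝 (Real.log 1)) :=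
      (Real.continuousAt_log (by norm_num)).tendsto.comp h1
    rw [Real.log_one] at h2
    apply h2.congr'
    filter_upwards [eventually_gt_atTop 0] with s hs
    rw [Real.log_div (by positivity) (by positivity)]
  constructor
  · exact integrableOn_Ioi_deriv_of_nonneg' hderiv hpos htend
  · have := integral_Ioi_of_hasDerivAt_of_nonneg' hderiv hpos htend
    simpa using this

private lemma g_int (a : ℝ) (ha : 0 < a) :
    IntegrableOn (fun s : ℝ => (s + a)⁻¹ - (s + 1)⁻¹) (Set.Ioi 0) := by
  rcases le_total a 1 with h | h
  · exact (base_int_aux a 1 ha one_pos h).1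
  · have h1 := ((base_int_aux 1 a one_pos ha h).1).neg
    have he : (fun s : ℝ => (s + a)⁻¹ - (s + 1)⁻¹) = -fun s : ℝ => (s + 1)⁻¹ - (s + a)⁻¹ := by
      funext s; simp
    rw [he]; exact h1

private lemma g_val (a : ℝ) (ha : 0 < a) :
    ∫ s in Set.Ioi (0:ℝ), ((s + a)⁻¹ - (s + 1)⁻¹) = - Real.log a := by
  rcases le_total a 1 with h | h
  · have := (base_int_aux a 1 ha one_pos h).2
    simpa using this
  · have h2 := (base_int_aux 1 a one_pos ha h).2
    have : ∫ s in Set.Ioi (0:ℝ), ((s + a)⁻¹ - (s + 1)⁻¹)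
        = - ∫ s in Set.Ioi (0:ℝ), ((s + 1)⁻¹ - (s + a)⁻¹) := by
      rw [← integral_neg]; congr 1; ext s; ring
    rw [this, h2]; simp

end ScalarLemmas

section MatrixLemmas

variable {n : ℕ}

private lemma unit_mul_star {A : Matrix (Fin n) (Fin n) ℂ} (hA : A.IsHermitian) :
    (hA.eigenvectorUnitary : Matrix (Fin n) (Fin n) ℂ) *
      star (hA.eigenvectorUnitary : Matrix (Fin n) (Fin n) ℂ) = 1 :=
  (Matrix.mem_unitaryGroup_iff).mp hA.eigenvectorUnitary.2

private lemma star_mul_unit {A : Matrix (Fin n) (Fin n) ℂ} (hA : A.IsHermitian) :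
    star (hA.eigenvectorUnitary : Matrix (Fin n) (Fin n) ℂ) *
      (hA.eigenvectorUnitary : Matrix (Fin n) (Fin n) ℂ) = 1 :=
  (Matrix.mem_unitaryGroup_iff').mp hA.eigenvectorUnitary.2

private lemma shift_eq {A : Matrix (Fin n) (Fin n) ℂ} (hA : A.IsHermitian) (s : ℝ) :
    (s : ℂ) • (1 : Matrix (Fin n) (Fin n) ℂ) + A =
      (hA.eigenvectorUnitary : Matrix (Fin n) (Fin n) ℂ) *
        Matrix.diagonal (fun k => ((s + hA.eigenvalues k : ℝ) : ℂ)) *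
        star (hA.eigenvectorUnitary : Matrix (Fin n) (Fin n) ℂ) := by
  set U := (hA.eigenvectorUnitary : Matrix (Fin n) (Fin n) ℂ) with hU
  have h1 : (s : ℂ) • (1 : Matrix (Fin n) (Fin n) ℂ) =
      U * ((s : ℂ) • (1 : Matrix (Fin n) (Fin n) ℂ)) * star U := by
    rw [Matrix.mul_smul, Matrix.smul_mul, mul_one, unit_mul_star hA]
  have h2 : Matrix.diagonal (fun k => ((s + hA.eigenvalues k : ℝ) : ℂ)) =
      (s : ℂ) • (1 : Matrix (Fin n) (Fin n) ℂ) +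
        Matrix.diagonal (RCLike.ofReal ∘ hA.eigenvalues) := by
    rw [Matrix.smul_one_eq_diagonal, Matrix.diagonal_add]
    congr 1; funext k; push_cast; rfl
  rw [h2, Matrix.mul_add, Matrix.add_mul, ← h1]
  congr 1
  exact hA.spectral_theorem

private lemma sandwich {U : Matrix (Fin n) (Fin n) ℂ} (hU : star U * U = 1) (hU2 : U * star U = 1)
    (d e : Fin n → ℂ) (h : ∀ k, d k * e k = 1) :
    (U * Matrix.diagonal d * star U) * (U * Matrix.diagonal e * star U) = 1 := by
  have h1 : (U * Matrix.diagonal d * star U) * (U * Matrix.diagonal e * star U) =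
      U * (Matrix.diagonal d * ((star U * U) * (Matrix.diagonal e * star U))) := by
    simp only [Matrix.mul_assoc]
  rw [h1, hU, one_mul, ← Matrix.mul_assoc (Matrix.diagonal d), Matrix.diagonal_mul_diagonal]
  have h2 : (fun k => d k * e k) = fun _ => (1 : ℂ) := funext h
  rw [h2, Matrix.diagonal_one, one_mul, hU2]

private lemma inv_shift {A : Matrix (Fin n) (Fin n) ℂ} (hA : A.PosDef) (s : ℝ) (hs : 0 ≤ s) :
    ((s : ℂ) • (1 : Matrix (Fin n) (Fin n) ℂ) + A)⁻¹ =
      (hA.1.eigenvectorUnitary : Matrix (Fin n) (Fin n) ℂ) *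
        Matrix.diagonal (fun k => (((s + hA.1.eigenvalues k)⁻¹ : ℝ) : ℂ)) *
        star (hA.1.eigenvectorUnitary : Matrix (Fin n) (Fin n) ℂ) := by
  apply Matrix.inv_eq_right_inv
  rw [shift_eq hA.1 s]
  apply sandwich (star_mul_unit hA.1) (unit_mul_star hA.1)
  intro k
  have hk : (0:ℝ) < s + hA.1.eigenvalues k := by
    have := hA.eigenvalues_pos k; linarith
  rw [← Complex.ofReal_mul, mul_inv_cancel₀ hk.ne']; norm_num

private lemma shift_mul_inv {A : Matrix (Fin n) (Fin n) ℂ} (hA : A.PosDef) (s : ℝ) (hs : 0 ≤ s) :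
    ((s : ℂ) • (1 : Matrix (Fin n) (Fin n) ℂ) + A) *
      ((s : ℂ) • (1 : Matrix (Fin n) (Fin n) ℂ) + A)⁻¹ = 1 := by
  rw [inv_shift hA s hs, shift_eq hA.1 s]
  apply sandwich (star_mul_unit hA.1) (unit_mul_star hA.1)
  intro k
  have hk : (0:ℝ) < s + hA.1.eigenvalues k := by
    have := hA.eigenvalues_pos k; linarith
  rw [← Complex.ofReal_mul, mul_inv_cancel₀ hk.ne']; norm_num

private lemma resolvent_diff {P Q : Matrix (Fin n) (Fin n) ℂ} (hP : P.PosDef) (hQ : Q.PosDef)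
    (s : ℝ) (hs : 0 ≤ s) :
    ((s : ℂ) • (1 : Matrix (Fin n) (Fin n) ℂ) + P)⁻¹ * (P - Q) *
      ((s : ℂ) • (1 : Matrix (Fin n) (Fin n) ℂ) + Q)⁻¹ =
    ((s : ℂ) • (1 : Matrix (Fin n) (Fin n) ℂ) + Q)⁻¹ -
      ((s : ℂ) • (1 : Matrix (Fin n) (Fin n) ℂ) + P)⁻¹ := by
  set X := (s : ℂ) • (1 : Matrix (Fin n) (Fin n) ℂ) + P with hX
  set Y := (s : ℂ) • (1 : Matrix (Fin n) (Fin n) ℂ) + Q with hY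
  have hX1 : X⁻¹ * X = 1 := mul_eq_one_comm.mp (shift_mul_inv hP s hs)
  have hY1 : Y * Y⁻¹ = 1 := shift_mul_inv hQ s hs
  have hPQ : P - Q = X - Y := by rw [hX, hY]; abel
  rw [hPQ, Matrix.mul_sub, Matrix.sub_mul, hX1, one_mul,
    Matrix.mul_assoc, hY1, mul_one]

private lemma entry_formula (U : Matrix (Fin n) (Fin n) ℂ) (d : Fin n → ℂ) (i j : Fin n) :
    (U * Matrix.diagonal d * star U) i j =
      ∑ k, U i k * d k * (starRingEnd ℂ) (U j k) := by
  rw [Matrix.mul_apply]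
  congr 1; funext k
  rw [Matrix.mul_diagonal, Matrix.star_apply]
  rfl

private lemma split_sum (W : Matrix (Fin n) (Fin n) ℂ) (a : Fin n → ℝ) (s : ℝ) (i j : Fin n) :
    ∑ k, (W i k * (starRingEnd ℂ) (W j k)) * (((s + a k)⁻¹ - (s + 1)⁻¹ : ℝ) : ℂ)
      = (∑ k, W i k * (((s + a k)⁻¹ : ℝ) : ℂ) * (starRingEnd ℂ) (W j k))
        - (∑ k, W i k * (starRingEnd ℂ) (W j k)) * (((s + 1)⁻¹ : ℝ) : ℂ) := by
  rw [Finset.sum_mul, ← Finset.sum_sub_distrib]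
  congr 1; funext k; push_cast; ring

end MatrixLemmas

/-- The matrix (principal) logarithm of a Hermitian matrix, defined via the spectral
decomposition: if `A = U diag(λ) U*` then `log A = U diag(log λ) U*`.  (Junk value `0` on
non-Hermitian input.) -/
noncomputable def matLog {n : ℕ} (A : Matrix (Fin n) (Fin n) ℂ) : Matrix (Fin n) (Fin n) ℂ :=
  if hA : A.IsHermitian then
    (Matrix.IsHermitian.eigenvectorUnitary hA : Matrix (Fin n) (Fin n) ℂ) *
      Matrix.diagonal (fun i => (Real.log (hA.eigenvalues i) : ℂ)) *
      star (Matrix.IsHermitian.eigenvectorUnitary hA : Matrix (Fin n) (Fin n) ℂ)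
  else 0

/-- **Integral representation of the difference of matrix logarithms.**  For positive definite
Hermitian matrices `P` and `Q`,
`log P - log Q = ∫₀^∞ (sI + P)⁻¹ (P - Q) (sI + Q)⁻¹ ds` (entrywise). -/
theorem matLog_sub_eq_integral_resolvent {n : ℕ} (P Q : Matrix (Fin n) (Fin n) ℂ)
    (hP : P.PosDef) (hQ : Q.PosDef) (i j : Fin n) :
    (matLog P - matLog Q) i j =
      ∫ s in Set.Ioi (0 : ℝ),
        (((s : ℂ) • (1 : Matrix (Fin n) (Fin n) ℂ) + P)⁻¹ * (P - Q) *
          ((s : ℂ) • (1 : Matrix (Fin n) (Fin n) ℂ) + Q)⁻¹) i j := by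
  classical
  set U := (hP.1.eigenvectorUnitary : Matrix (Fin n) (Fin n) ℂ) with hUdef
  set V := (hQ.1.eigenvectorUnitary : Matrix (Fin n) (Fin n) ℂ) with hVdef
  set μ := hP.1.eigenvalues with hμdef
  set ν := hQ.1.eigenvalues with hνdef
  have hμ : ∀ k, 0 < μ k := hP.eigenvalues_pos
  have hν : ∀ k, 0 < ν k := hQ.eigenvalues_pos
  set cU : Fin n → ℂ := fun k => U i k * (starRingEnd ℂ) (U j k) with hcU
  set cV : Fin n → ℂ := fun k => V i k * (starRingEnd ℂ) (V j k) with hcV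
  have hsum : ∑ k, cU k = ∑ k, cV k := by
    have h1 : ∑ k, cU k = (U * star U) i j := by
      rw [Matrix.mul_apply]
      exact Finset.sum_congr rfl fun k _ => by rw [Matrix.star_apply]; rfl
    have h2 : ∑ k, cV k = (V * star V) i j := by
      rw [Matrix.mul_apply]
      exact Finset.sum_congr rfl fun k _ => by rw [Matrix.star_apply]; rfl
    rw [h1, h2, unit_mul_star hP.1, unit_mul_star hQ.1]
  -- rewrite the integrand
  have hinteq : Set.EqOn
      (fun s : ℝ => (((s : ℂ) • (1 : Matrix (Fin n) (Fin n) ℂ) + P)⁻¹ * (P - Q) *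
          ((s : ℂ) • (1 : Matrix (Fin n) (Fin n) ℂ) + Q)⁻¹) i j)
      (fun s : ℝ => (∑ k, cV k * (((s + ν k)⁻¹ - (s + 1)⁻¹ : ℝ) : ℂ))
        - ∑ k, cU k * (((s + μ k)⁻¹ - (s + 1)⁻¹ : ℝ) : ℂ))
      (Set.Ioi (0:ℝ)) := by
    intro s hs
    have hs0 : (0:ℝ) ≤ s := (Set.mem_Ioi.mp hs).le
    simp only
    rw [resolvent_diff hP hQ s hs0, Matrix.sub_apply, inv_shift hQ s hs0, inv_shift hP s hs0,
      entry_formula, entry_formula, split_sum V ν s i j, split_sum U μ s i j, ← hcU, ← hcV, hsum]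
    ring
  rw [MeasureTheory.setIntegral_congr_fun measurableSet_Ioi hinteq]
  have hIntV : IntegrableOn
      (fun s : ℝ => ∑ k, cV k * (((s + ν k)⁻¹ - (s + 1)⁻¹ : ℝ) : ℂ)) (Set.Ioi 0) :=
    integrable_finset_sum _ fun k _ => ((g_int (ν k) (hν k)).ofReal.const_mul (cV k))
  have hIntU : IntegrableOn
      (fun s : ℝ => ∑ k, cU k * (((s + μ k)⁻¹ - (s + 1)⁻¹ : ℝ) : ℂ)) (Set.Ioi 0) :=
    integrable_finset_sum _ fun k _ => ((g_int (μ k) (hμ k)).ofReal.const_mul (cU k))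
  rw [MeasureTheory.integral_sub hIntV hIntU]
  have hval : ∀ (c : Fin n → ℂ) (a : Fin n → ℝ), (∀ k, 0 < a k) →
      ∫ s in Set.Ioi (0:ℝ), ∑ k, c k * (((s + a k)⁻¹ - (s + 1)⁻¹ : ℝ) : ℂ)
        = -∑ k, c k * (Real.log (a k) : ℂ) := by
    intro c a ha
    have hstep := MeasureTheory.integral_finset_sum (μ := volume.restrict (Set.Ioi 0))
      Finset.univ (f := fun k (s : ℝ) => c k * (((s + a k)⁻¹ - (s + 1)⁻¹ : ℝ) : ℂ))
      (fun k _ => ((g_int (a k) (ha k)).ofReal.const_mul (c k)))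
    rw [hstep, ← Finset.sum_neg_distrib]
    apply Finset.sum_congr rfl
    intro k _
    rw [MeasureTheory.integral_const_mul]
    have : ∫ s in Set.Ioi (0:ℝ), (((s + a k)⁻¹ - (s + 1)⁻¹ : ℝ) : ℂ)
        = ((∫ s in Set.Ioi (0:ℝ), ((s + a k)⁻¹ - (s + 1)⁻¹ : ℝ) : ℝ) : ℂ) :=
      integral_ofReal
    rw [this, g_val (a k) (ha k)]
    push_cast
    ring
  rw [hval cV ν hν, hval cU μ hμ]
  -- now compute the left-hand side
  have hLP : matLog P i j = ∑ k, cU k * (Real.log (μ k) : ℂ) := by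
    rw [matLog, dif_pos hP.1, entry_formula]
    apply Finset.sum_congr rfl
    intro k _
    rw [hcU]
    ring
  have hLQ : matLog Q i j = ∑ k, cV k * (Real.log (ν k) : ℂ) := by
    rw [matLog, dif_pos hQ.1, entry_formula]
    apply Finset.sum_congr rfl
    intro k _
    rw [hcV]
    ring
  rw [Matrix.sub_apply, hLP, hLQ]
  ring
end

section
/- For the one-qubit model with true state ρ = I/2, diagonal model σ(θ) = diag(cos²θ, sin²θ), and the Pauli 6-outcome measurement with weights 1/3 on each eigenbasis projector, the induced classical KL divergence equals K(θ) = −(1/6)(log(sin²θ cos²θ) + 2 log 2), and consequently D(ρ‖σ(θ)) = 3·K(θ) for all θ ∈ (0, π/2). -/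
open ComplexOrder Real

/-- The quantum relative entropy `D(ρ‖σ) = Tr(ρ(log ρ − log σ))`. -/
noncomputable def qRelEntropy {n : ℕ} (ρ σ : Matrix (Fin n) (Fin n) ℂ) : ℝ :=
  ((ρ * (matLog ρ - matLog σ)).trace).re

/-- The Kullback–Leibler divergence on a finite outcome space. -/
noncomputable def klDiv {X : Type*} [Fintype X] (q p : X → ℝ) : ℝ :=
  ∑ x, q x * Real.log (q x / p x)

/-- The maximally mixed one-qubit state `ρ = I/2`. -/
noncomputable def ρmm : Matrix (Fin 2) (Fin 2) ℂ := (1 / 2 : ℂ) • 1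

/-- The one-parameter diagonal model `σ(θ) = diag(cos²θ, sin²θ)`. -/
noncomputable def σmod (θ : ℝ) : Matrix (Fin 2) (Fin 2) ℂ :=
  Matrix.diagonal ![((Real.cos θ ^ 2 : ℝ) : ℂ), ((Real.sin θ ^ 2 : ℝ) : ℂ)]

/-- The Pauli 6-outcome measurement: `(1/3)|0⟩⟨0|, (1/3)|1⟩⟨1|, (1/3)|+⟩⟨+|, (1/3)|−⟩⟨−|,
(1/3)|r⟩⟨r|, (1/3)|l⟩⟨l|`, the eigenbasis projectors of the Pauli `Z`, `X`, `Y` with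
uniform weights `1/3`. -/
noncomputable def pauliPOVM : Fin 6 → Matrix (Fin 2) (Fin 2) ℂ :=
  ![(1 / 3 : ℂ) • Matrix.diagonal ![1, 0],
    (1 / 3 : ℂ) • Matrix.diagonal ![0, 1],
    (1 / 6 : ℂ) • !![1, 1; 1, 1],
    (1 / 6 : ℂ) • !![1, -1; -1, 1],
    (1 / 6 : ℂ) • !![1, -Complex.I; Complex.I, 1],
    (1 / 6 : ℂ) • !![1, Complex.I; -Complex.I, 1]]

lemma trace_matLog {n : ℕ} {A : Matrix (Fin n) (Fin n) ℂ} (hA : A.PosDef) :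
    (matLog A).trace = ((Real.log A.det.re : ℝ) : ℂ) := by
  have h := hA.1
  rw [matLog, dif_pos h, Matrix.trace_mul_cycle,
    Unitary.coe_star_mul_self, one_mul, Matrix.trace_diagonal]
  have hdet : A.det = ∏ i, ((hA.1.eigenvalues i : ℝ) : ℂ) := h.det_eq_prod_eigenvalues
  have hre : A.det.re = ∏ i, hA.1.eigenvalues i := by
    rw [hdet, ← Complex.ofReal_prod, Complex.ofReal_re]
  rw [hre, Real.log_prod (fun i _ => (hA.eigenvalues_pos i).ne')]
  push_cast
  rfl

set_option maxHeartbeats 1000000 in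
/-- **KL divergence of the Pauli-measured one-qubit model, and its ratio to the quantum
relative entropy.**  For `ρ = I/2`, `σ(θ) = diag(cos²θ, sin²θ)` and the Pauli 6-outcome
measurement, the induced classical KL divergence equals
`K(θ) = −(1/6)(log(sin²θ cos²θ) + 2 log 2)`, and consequently `D(ρ‖σ(θ)) = 3·K(θ)` for all
`θ ∈ (0, π/2)`. -/
theorem one_qubit_pauli_kl :
    ∀ θ ∈ Set.Ioo (0 : ℝ) (π / 2),
      klDiv (fun x => ((ρmm * pauliPOVM x).trace).re)
          (fun x => ((σmod θ * pauliPOVM x).trace).re) =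
        -(1 / 6 : ℝ) * (Real.log (Real.sin θ ^ 2 * Real.cos θ ^ 2) + 2 * Real.log 2) ∧
      qRelEntropy ρmm (σmod θ) =
        3 * klDiv (fun x => ((ρmm * pauliPOVM x).trace).re)
          (fun x => ((σmod θ * pauliPOVM x).trace).re) := by
  rintro θ ⟨h0, h1⟩
  have p0 : pauliPOVM 0 = (1 / 3 : ℂ) • Matrix.diagonal ![1, 0] := rfl
  have p1 : pauliPOVM 1 = (1 / 3 : ℂ) • Matrix.diagonal ![0, 1] := rfl
  have p2 : pauliPOVM 2 = (1 / 6 : ℂ) • !![1, 1; 1, 1] := rfl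
  have p3 : pauliPOVM 3 = (1 / 6 : ℂ) • !![1, -1; -1, 1] := rfl
  have p4 : pauliPOVM 4 = (1 / 6 : ℂ) • !![1, -Complex.I; Complex.I, 1] := rfl
  have p5 : pauliPOVM 5 = (1 / 6 : ℂ) • !![1, Complex.I; -Complex.I, 1] := rfl
  have hcos : 0 < Real.cos θ := Real.cos_pos_of_mem_Ioo ⟨by linarith [Real.pi_pos], h1⟩
  have hsin : 0 < Real.sin θ := Real.sin_pos_of_pos_of_lt_pi h0 (by linarith [Real.pi_pos])
  have hc2 : 0 < Real.cos θ ^ 2 := by positivity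
  have hs2 : 0 < Real.sin θ ^ 2 := by positivity
  have hpyth : Real.sin θ ^ 2 + Real.cos θ ^ 2 = 1 := Real.sin_sq_add_cos_sq θ
  -- trace values
  have e0 : ((ρmm * pauliPOVM 0).trace).re = 1/6 := by
    rw [p0]; simp [ρmm, Matrix.trace_fin_two, Matrix.mul_apply, Fin.sum_univ_two]; norm_num
  have e1 : ((ρmm * pauliPOVM 1).trace).re = 1/6 := by
    rw [p1]; simp [ρmm, Matrix.trace_fin_two, Matrix.mul_apply, Fin.sum_univ_two]; norm_num
  have e2 : ((ρmm * pauliPOVM 2).trace).re = 1/6 := by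
    rw [p2]; simp [ρmm, Matrix.trace_fin_two, Matrix.mul_apply, Fin.sum_univ_two]; norm_num
  have e3 : ((ρmm * pauliPOVM 3).trace).re = 1/6 := by
    rw [p3]; simp [ρmm, Matrix.trace_fin_two, Matrix.mul_apply, Fin.sum_univ_two]; norm_num
  have e4 : ((ρmm * pauliPOVM 4).trace).re = 1/6 := by
    rw [p4]; simp [ρmm, Matrix.trace_fin_two, Matrix.mul_apply, Fin.sum_univ_two]; norm_num
  have e5 : ((ρmm * pauliPOVM 5).trace).re = 1/6 := by
    rw [p5]; simp [ρmm, Matrix.trace_fin_two, Matrix.mul_apply, Fin.sum_univ_two]; norm_num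
  have f0 : ((σmod θ * pauliPOVM 0).trace).re = Real.cos θ ^ 2 / 3 := by
    rw [p0]; simp [σmod, Matrix.trace_fin_two, Matrix.mul_apply, Fin.sum_univ_two,
      -Complex.ofReal_cos, -Complex.ofReal_sin, ← Complex.ofReal_pow]
    ring
  have f1 : ((σmod θ * pauliPOVM 1).trace).re = Real.sin θ ^ 2 / 3 := by
    rw [p1]; simp [σmod, Matrix.trace_fin_two, Matrix.mul_apply, Fin.sum_univ_two,
      -Complex.ofReal_cos, -Complex.ofReal_sin, ← Complex.ofReal_pow]
    ring
  have f2 : ((σmod θ * pauliPOVM 2).trace).re = 1/6 := by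
    rw [p2]; simp [σmod, Matrix.trace_fin_two, Matrix.mul_apply, Fin.sum_univ_two,
      -Complex.ofReal_cos, -Complex.ofReal_sin, ← Complex.ofReal_pow]
    nlinarith
  have f3 : ((σmod θ * pauliPOVM 3).trace).re = 1/6 := by
    rw [p3]; simp [σmod, Matrix.trace_fin_two, Matrix.mul_apply, Fin.sum_univ_two,
      -Complex.ofReal_cos, -Complex.ofReal_sin, ← Complex.ofReal_pow]
    nlinarith
  have f4 : ((σmod θ * pauliPOVM 4).trace).re = 1/6 := by
    rw [p4]; simp [σmod, Matrix.trace_fin_two, Matrix.mul_apply, Fin.sum_univ_two,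
      -Complex.ofReal_cos, -Complex.ofReal_sin, ← Complex.ofReal_pow]
    nlinarith
  have f5 : ((σmod θ * pauliPOVM 5).trace).re = 1/6 := by
    rw [p5]; simp [σmod, Matrix.trace_fin_two, Matrix.mul_apply, Fin.sum_univ_two,
      -Complex.ofReal_cos, -Complex.ofReal_sin, ← Complex.ofReal_pow]
    nlinarith
  have hK : klDiv (fun x => ((ρmm * pauliPOVM x).trace).re)
      (fun x => ((σmod θ * pauliPOVM x).trace).re) =
      -(1 / 6 : ℝ) * (Real.log (Real.sin θ ^ 2 * Real.cos θ ^ 2) + 2 * Real.log 2) := by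
    rw [klDiv, Fin.sum_univ_six]
    simp only [e0, e1, e2, e3, e4, e5, f0, f1, f2, f3, f4, f5]
    have hdc : (1/6 : ℝ) / (Real.cos θ ^ 2 / 3) = (2 * Real.cos θ ^ 2)⁻¹ := by
      field_simp; ring
    have hds : (1/6 : ℝ) / (Real.sin θ ^ 2 / 3) = (2 * Real.sin θ ^ 2)⁻¹ := by
      field_simp; ring
    have l1 : Real.log ((1/6 : ℝ) / (Real.cos θ ^ 2 / 3)) = -(Real.log 2 + Real.log (Real.cos θ ^ 2)) := by
      rw [hdc, Real.log_inv, Real.log_mul two_ne_zero hc2.ne']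
    have l2 : Real.log ((1/6 : ℝ) / (Real.sin θ ^ 2 / 3)) = -(Real.log 2 + Real.log (Real.sin θ ^ 2)) := by
      rw [hds, Real.log_inv, Real.log_mul two_ne_zero hs2.ne']
    have l3 : Real.log (Real.sin θ ^ 2 * Real.cos θ ^ 2) =
        Real.log (Real.sin θ ^ 2) + Real.log (Real.cos θ ^ 2) :=
      Real.log_mul hs2.ne' hc2.ne'
    rw [l1, l2, l3]
    norm_num
    ring
  refine ⟨hK, ?_⟩
  -- positive definiteness
  have hρdiag : ρmm = Matrix.diagonal (fun _ => (1/2 : ℂ)) := by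
    ext i j
    rcases Fin.exists_fin_two.mp ⟨i, rfl⟩ with _ | _ <;>
      simp [ρmm, Matrix.one_apply, Matrix.diagonal]
  have hρ : ρmm.PosDef := by
    rw [hρdiag]
    refine Matrix.posDef_diagonal_iff.mpr fun i => ?_
    rw [show (1/2 : ℂ) = ((1/2 : ℝ) : ℂ) by norm_num]
    exact Complex.zero_lt_real.mpr (by norm_num)
  have hσ : (σmod θ).PosDef := by
    rw [σmod]
    refine Matrix.posDef_diagonal_iff.mpr fun i => ?_
    fin_cases i <;> simp only [Matrix.cons_val_zero, Matrix.cons_val_one, Matrix.head_cons] <;>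
      exact Complex.zero_lt_real.mpr (by positivity)
  have hdρ : ρmm.det.re = 1/4 := by
    rw [hρdiag, Matrix.det_diagonal, Fin.prod_univ_two]
    norm_num
  have hdσ : (σmod θ).det.re = Real.cos θ ^ 2 * Real.sin θ ^ 2 := by
    rw [σmod, Matrix.det_diagonal, Fin.prod_univ_two]
    simp [← Complex.ofReal_mul, -Complex.ofReal_pow, -Complex.ofReal_cos, -Complex.ofReal_sin]
  have hmul : ρmm * (matLog ρmm - matLog (σmod θ)) =
      (1/2 : ℂ) • (matLog ρmm - matLog (σmod θ)) := by
    rw [ρmm, smul_mul_assoc, one_mul]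
  have : qRelEntropy ρmm (σmod θ) =
      (1/2 : ℝ) * (Real.log (1/4) - Real.log (Real.cos θ ^ 2 * Real.sin θ ^ 2)) := by
    rw [qRelEntropy, hmul, Matrix.trace_smul, Matrix.trace_sub,
      trace_matLog hρ, trace_matLog hσ, hdρ, hdσ]
    rw [show (1/2 : ℂ) = ((1/2 : ℝ) : ℂ) by norm_num, ← Complex.ofReal_sub,
      smul_eq_mul, ← Complex.ofReal_mul, Complex.ofReal_re]
  rw [this, hK]
  have h4 : Real.log (1/4 : ℝ) = -(2 * Real.log 2) := by
    rw [one_div, Real.log_inv, show (4:ℝ) = 2^2 by norm_num, Real.log_pow]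
    push_cast; ring
  have hcomm : Real.log (Real.cos θ ^ 2 * Real.sin θ ^ 2) =
      Real.log (Real.sin θ ^ 2 * Real.cos θ ^ 2) := by ring_nf
  rw [h4, hcomm]
  ring
end
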